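/- Let $A, B$ be nonpositive operators on a Banach space $X$ with the approximation property, $A \ne B$, $D(A)\subseteq D(B)$, and $B - A$ nuclear. Then for all $\lambda > 1/(2\|A-B\|)$, the perturbation determinant $\Delta_{B/A}$ is differentiable at $\lambda$ and $\frac{\Delta'_{B/A}(\lambda)}{\Delta_{B/A}(\lambda)} = \mathrm{tr}\big(R(\lambda, A) - R(\lambda, B)\big)$. -/

import Mathlib

open MeasureTheory Set

variable {X : Type*} [NormedAddCommGroup X] [NormedSpace ℂ X] [CompleteSpace X]

/-- `R` is the resolvent of the (possibly unbounded) operator `A` at the real point `t`,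
i.e. `R` is an everywhere defined two-sided bounded inverse of `t•I - A`. -/
structure IsResolvent (A : X →ₗ.[ℂ] X) (t : ℝ) (R : X →L[ℂ] X) : Prop where
  mem : ∀ x : X, R x ∈ A.domain
  right_inv : ∀ x : X, (t : ℂ) • (R x) - A ⟨R x, mem x⟩ = x
  left_inv : ∀ x : A.domain, R ((t : ℂ) • (x : X) - A x) = x

/-- The sum of an unbounded operator and a bounded operator, defined on the domain of the
unbounded one. -/
noncomputable def pAdd (A : X →ₗ.[ℂ] X) (V : X →L[ℂ] X) : X →ₗ.[ℂ] X where
  domain := A.domain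
  toFun := A.toFun + (V : X →ₗ[ℂ] X).comp A.domain.subtype

/-- A symmetrically normed operator ideal in `L(X)`: a two-sided ideal with a complete norm
`inorm` dominating the operator norm and satisfying `‖A S B‖_I ≤ ‖A‖ ‖S‖_I ‖B‖`.
Completeness is encoded through closure under Bochner integration with a dominating
`I`-norm bound. -/
structure OperatorIdeal (X : Type*) [NormedAddCommGroup X] [NormedSpace ℂ X] where
  Mem : (X →L[ℂ] X) → Prop
  inorm : (X →L[ℂ] X) → ℝ
  zero_mem : Mem 0
  add_mem : ∀ {S T}, Mem S → Mem T → Mem (S + T)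
  smul_mem : ∀ (c : ℂ) {S}, Mem S → Mem (c • S)
  comp_mem : ∀ (A : X →L[ℂ] X) {S} (B : X →L[ℂ] X), Mem S → Mem (A.comp (S.comp B))
  inorm_nonneg : ∀ S, 0 ≤ inorm S
  inorm_add_le : ∀ S T, inorm (S + T) ≤ inorm S + inorm T
  inorm_smul : ∀ (c : ℂ) (S), inorm (c • S) = ‖c‖ * inorm S
  inorm_comp_le : ∀ (A S B : X →L[ℂ] X), Mem S →
    inorm (A.comp (S.comp B)) ≤ ‖A‖ * inorm S * ‖B‖
  opNorm_le_inorm : ∀ S, Mem S → ‖S‖ ≤ inorm S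
  integral_mem : ∀ (μ : MeasureTheory.Measure ℝ) (f : ℝ → (X →L[ℂ] X)) (g : ℝ → ℝ),
    MeasureTheory.Integrable g μ → (∀ᵐ t ∂μ, Mem (f t) ∧ inorm (f t) ≤ g t) →
    MeasureTheory.Integrable f μ →
    Mem (∫ t, f t ∂μ) ∧ inorm (∫ t, f t ∂μ) ≤ ∫ t, g t ∂μ

/-- The perturbation determinant `Δ_{B/A}(λ) = exp(tr(ψ_λ(B) - ψ_λ(A)))`, where
`ψ_λ(s) = log λ - log(λ - s)` and, via the Hirsch calculus,
`ψ_λ(B) - ψ_λ(A) = ∫_λ^∞ (R(t,B) - R(t,A)) dt`, expressed through the resolvents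
`RA, RB` of `A`, `B` and a trace `tr` on the nuclear operators. -/
noncomputable def pdet {X : Type*} [NormedAddCommGroup X] [NormedSpace ℂ X]
    [CompleteSpace X] (tr : (X →L[ℂ] X) → ℂ) (RA RB : ℝ → (X →L[ℂ] X)) (lam : ℝ) : ℂ :=
  Complex.exp (tr (∫ t in Ioi lam, (RB t - RA t)))

lemma resolvent_first_id {A : X →ₗ.[ℂ] X} {t s : ℝ} {Rt Rs : X →L[ℂ] X}
    (ht : IsResolvent A t Rt) (hs : IsResolvent A s Rs) :
    Rt - Rs = ((s : ℂ) - t) • (Rt.comp Rs) := by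
  ext x
  have hmem := hs.mem x
  set y := Rs x with hy
  have hx : (s : ℂ) • y - A ⟨y, hmem⟩ = x := hs.right_inv x
  have h2 : Rt ((t : ℂ) • y - A ⟨y, hmem⟩) = y := ht.left_inv ⟨y, hmem⟩
  have hxeq : ((t : ℂ) • y - A ⟨y, hmem⟩) + ((s : ℂ) - t) • y = x := by
    conv_rhs => rw [← hx]
    rw [sub_smul]; abel
  have hkey : Rt x = y + ((s : ℂ) - t) • Rt y := by
    conv_lhs => rw [← hxeq]
    rw [map_add, h2, _root_.map_smul]
  rw [ContinuousLinearMap.sub_apply, hkey, ContinuousLinearMap.smul_apply,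
    ContinuousLinearMap.comp_apply, ← hy]
  abel

lemma resolvent_second_id {A B : X →ₗ.[ℂ] X} (hdom : A.domain ≤ B.domain)
    {W : X →L[ℂ] X} (hWext : ∀ x : A.domain, W (x : X) = B ⟨(x : X), hdom x.2⟩ - A x)
    {t : ℝ} {Rt St : X →L[ℂ] X}
    (hA : IsResolvent A t Rt) (hB : IsResolvent B t St) :
    St - Rt = St.comp (W.comp Rt) := by
  ext x
  have hmem := hA.mem x
  set y := Rt x with hy
  have hx : (t : ℂ) • y - A ⟨y, hmem⟩ = x := hA.right_inv x
  have hW' : W y = B ⟨y, hdom hmem⟩ - A ⟨y, hmem⟩ := hWext ⟨y, hmem⟩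
  have key : St (x - W y) = y := by
    have hrw : x - W y = (t : ℂ) • y - B ⟨y, hdom hmem⟩ := by
      conv_lhs => rw [← hx]
      rw [hW']; abel
    rw [hrw]
    exact hB.left_inv ⟨y, hdom hmem⟩
  have h3 : St x - St (W y) = y := by rw [← map_sub]; exact key
  rw [ContinuousLinearMap.sub_apply, ContinuousLinearMap.comp_apply,
    ContinuousLinearMap.comp_apply, ← hy]
  rw [sub_eq_iff_eq_add] at h3 ⊢
  rw [h3]; abel

lemma OperatorIdeal.setIntegral_mem (S1 : OperatorIdeal X) {f : ℝ → X →L[ℂ] X} {g : ℝ → ℝ}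
    {s : Set ℝ} (hs : MeasurableSet s) (hg : IntegrableOn g s)
    (h : ∀ t ∈ s, S1.Mem (f t) ∧ S1.inorm (f t) ≤ g t) (hf : IntegrableOn f s) :
    S1.Mem (∫ t in s, f t) ∧ S1.inorm (∫ t in s, f t) ≤ ∫ t in s, g t :=
  S1.integral_mem _ f g hg ((ae_restrict_iff' hs).2 (Filter.Eventually.of_forall h)) hf

set_option maxHeartbeats 1000000 in
set_option synthInstance.maxHeartbeats 200000 in
/-- Theorem 4: for nonpositive operators `A ≠ B` with `D(A) ⊆ D(B)` and nuclear `B - A`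
(with bounded extension `W`), for all `λ > 1/(2‖A-B‖)` the perturbation determinant is
differentiable at `λ` with `Δ'_{B/A}(λ)/Δ_{B/A}(λ) = tr(R(λ,A) - R(λ,B))`. -/
theorem pdet_logDeriv
    (S1 : OperatorIdeal X) (tr : (X →L[ℂ] X) → ℂ)
    (htr_add : ∀ S T : X →L[ℂ] X, S1.Mem S → S1.Mem T → tr (S + T) = tr S + tr T)
    (htr_smul : ∀ (c : ℂ) (S : X →L[ℂ] X), S1.Mem S → tr (c • S) = c * tr S)
    (htr_bound : ∀ S : X →L[ℂ] X, S1.Mem S → ‖tr S‖ ≤ S1.inorm S)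
    (A B : X →ₗ.[ℂ] X) (hAB : A ≠ B)
    (hAclosed : IsClosed (A.graph : Set (X × X)))
    (hBclosed : IsClosed (B.graph : Set (X × X)))
    (hAdense : Dense (A.domain : Set X)) (hBdense : Dense (B.domain : Set X))
    (RA RB : ℝ → (X →L[ℂ] X))
    (hRA : ∀ t > (0 : ℝ), IsResolvent A t (RA t))
    (hRB : ∀ t > (0 : ℝ), IsResolvent B t (RB t))
    (MA MB : ℝ)
    (hMA : IsLUB ((fun t => t * ‖RA t‖) '' Ioi (0 : ℝ)) MA)
    (hMB : IsLUB ((fun t => t * ‖RB t‖) '' Ioi (0 : ℝ)) MB)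
    (hdom : A.domain ≤ B.domain)
    (W : X →L[ℂ] X) (hW : S1.Mem W)
    (hWext : ∀ x : A.domain, W (x : X) = B ⟨(x : X), hdom x.2⟩ - A x) :
    ∀ lam : ℝ, 1 / (2 * ‖W‖) < lam →
      HasDerivAt (fun l => pdet tr RA RB l)
        (pdet tr RA RB lam * tr (RA lam - RB lam)) lam := by
  intro lam hlam
  haveI : SecondCountableTopologyEither ℝ (X →L[ℂ] X) := ⟨Or.inl inferInstance⟩
  -- lam is positive
  have hlam0 : 0 < lam := by
    rcases (norm_nonneg W).eq_or_lt with h | h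
    · rw [← h] at hlam; simpa using hlam
    · exact lt_trans (by positivity) hlam
  set a : ℝ := lam / 2 with ha_def
  have ha0 : 0 < a := by positivity
  have halam : a < lam := by rw [ha_def]; linarith
  -- bounds on resolvents
  have hMA0 : 0 ≤ MA := le_trans (by positivity) (hMA.1 ⟨1, mem_Ioi.2 one_pos, rfl⟩)
  have hMB0 : 0 ≤ MB := le_trans (by positivity) (hMB.1 ⟨1, mem_Ioi.2 one_pos, rfl⟩)
  have hRAb : ∀ t : ℝ, 0 < t → ‖RA t‖ ≤ MA / t := by
    intro t ht
    have h1 : t * ‖RA t‖ ≤ MA := hMA.1 ⟨t, mem_Ioi.2 ht, rfl⟩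
    rw [le_div_iff₀ ht, mul_comm]; exact h1
  have hRBb : ∀ t : ℝ, 0 < t → ‖RB t‖ ≤ MB / t := by
    intro t ht
    have h1 : t * ‖RB t‖ ≤ MB := hMB.1 ⟨t, mem_Ioi.2 ht, rfl⟩
    rw [le_div_iff₀ ht, mul_comm]; exact h1
  set NW : ℝ := S1.inorm W with hNW_def
  have hNW0 : 0 ≤ NW := S1.inorm_nonneg W
  set CA : ℝ := MA / a with hCA_def
  set CB : ℝ := MB / a with hCB_def
  have hCA0 : 0 ≤ CA := by positivity
  have hCB0 : 0 ≤ CB := by positivity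
  have hRAle : ∀ u : ℝ, a ≤ u → ‖RA u‖ ≤ CA := by
    intro u hu
    refine (hRAb u (ha0.trans_le hu)).trans ?_
    rw [hCA_def]; gcongr
  have hRBle : ∀ u : ℝ, a ≤ u → ‖RB u‖ ≤ CB := by
    intro u hu
    refine (hRBb u (ha0.trans_le hu)).trans ?_
    rw [hCB_def]; gcongr
  have hnormC : ∀ u v : ℝ, ‖((v : ℂ) - u)‖ = |u - v| := by
    intro u v
    rw [show ((v : ℂ) - u) = ((v - u : ℝ) : ℂ) by push_cast; ring]
    rw [Complex.norm_real, Real.norm_eq_abs, abs_sub_comm]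
  have hRAlip : ∀ u : ℝ, a ≤ u → ∀ v : ℝ, a ≤ v → ‖RA u - RA v‖ ≤ CA * CA * |u - v| := by
    intro u hu v hv
    rw [resolvent_first_id (hRA u (ha0.trans_le hu)) (hRA v (ha0.trans_le hv))]
    calc ‖((v : ℂ) - u) • ((RA u).comp (RA v))‖
        = |u - v| * ‖(RA u).comp (RA v)‖ := by rw [norm_smul ((v:ℂ)-(u:ℂ)) ((RA u).comp (RA v)), hnormC]
      _  ≤ |u - v| * (CA * CA) := by
          refine mul_le_mul_of_nonneg_left ?_ (abs_nonneg _)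
          exact ((RA u).opNorm_comp_le (RA v)).trans
            (mul_le_mul (hRAle u hu) (hRAle v hv) (norm_nonneg _) hCA0)
      _ = CA * CA * |u - v| := by ring
  have hRBlip : ∀ u : ℝ, a ≤ u → ∀ v : ℝ, a ≤ v → ‖RB u - RB v‖ ≤ CB * CB * |u - v| := by
    intro u hu v hv
    rw [resolvent_first_id (hRB u (ha0.trans_le hu)) (hRB v (ha0.trans_le hv))]
    calc ‖((v : ℂ) - u) • ((RB u).comp (RB v))‖
        = |u - v| * ‖(RB u).comp (RB v)‖ := by rw [norm_smul ((v:ℂ)-(u:ℂ)) ((RB u).comp (RB v)), hnormC]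
      _  ≤ |u - v| * (CB * CB) := by
          refine mul_le_mul_of_nonneg_left ?_ (abs_nonneg _)
          exact ((RB u).opNorm_comp_le (RB v)).trans
            (mul_le_mul (hRBle u hu) (hRBle v hv) (norm_nonneg _) hCB0)
      _ = CB * CB * |u - v| := by ring
  -- the integrand
  set f : ℝ → X →L[ℂ] X := fun t => RB t - RA t with hf_def
  have hf_eq : ∀ t : ℝ, 0 < t → f t = (RB t).comp (W.comp (RA t)) := fun t ht =>
    resolvent_second_id hdom hWext (hRA t ht) (hRB t ht)
  have hfmem : ∀ t : ℝ, 0 < t → S1.Mem (f t) := fun t ht => by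
    rw [hf_eq t ht]; exact S1.comp_mem _ _ hW
  have hmem_sub : ∀ {S T : X →L[ℂ] X}, S1.Mem S → S1.Mem T → S1.Mem (S - T) := by
    intro S T hS hT
    have := S1.add_mem hS (S1.smul_mem (-1) hT)
    simpa [neg_smul, one_smul, sub_eq_add_neg] using this
  set C : ℝ := MB * NW * MA with hC_def
  have hC0 : 0 ≤ C := by positivity
  set g0 : ℝ → ℝ := fun t => C / t ^ 2 with hg0_def
  have hfnorm : ∀ t : ℝ, a ≤ t → S1.inorm (f t) ≤ g0 t := by
    intro t ht
    have ht0 : 0 < t := ha0.trans_le ht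
    rw [hf_eq t ht0]
    calc S1.inorm ((RB t).comp (W.comp (RA t))) ≤ ‖RB t‖ * NW * ‖RA t‖ :=
          S1.inorm_comp_le _ _ _ hW
      _ ≤ (MB / t) * NW * (MA / t) := by
          have h1 := hRAb t ht0
          have h2 := hRBb t ht0
          have h3 : (0:ℝ) ≤ MB / t := by positivity
          gcongr
      _ = g0 t := by
          have htne : t ≠ 0 := ne_of_gt ht0
          rw [hg0_def, hC_def]
          field_simp
  -- inorm Lipschitz estimate for f
  set K : ℝ := NW * (CB * CB * CA + CB * (CA * CA)) with hK_def
  have hK0 : 0 ≤ K := by positivity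
  have hdecomp : ∀ u : ℝ, 0 < u → ∀ v : ℝ, 0 < v → f u - f v =
      (RB u - RB v).comp (W.comp (RA u)) + (RB v).comp (W.comp (RA u - RA v)) := by
    intro u hu v hv
    rw [hf_eq u hu, hf_eq v hv]
    simp only [ContinuousLinearMap.sub_comp, ContinuousLinearMap.comp_sub]
    abel
  have hflip : ∀ u : ℝ, a ≤ u → ∀ v : ℝ, a ≤ v → S1.inorm (f u - f v) ≤ K * |u - v| := by
    intro u hu v hv
    rw [hdecomp u (ha0.trans_le hu) v (ha0.trans_le hv)]
    refine (S1.inorm_add_le _ _).trans ?_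
    have h1 := S1.inorm_comp_le (RB u - RB v) W (RA u) hW
    have h2 := S1.inorm_comp_le (RB v) W (RA u - RA v) hW
    calc S1.inorm ((RB u - RB v).comp (W.comp (RA u))) +
          S1.inorm ((RB v).comp (W.comp (RA u - RA v)))
        ≤ ‖RB u - RB v‖ * NW * ‖RA u‖ + ‖RB v‖ * NW * ‖RA u - RA v‖ := add_le_add h1 h2
      _ ≤ (CB * CB * |u - v|) * NW * CA + CB * NW * (CA * CA * |u - v|) := by
          have e1 := hRBlip u hu v hv
          have e2 := hRAlip u hu v hv
          have e3 := hRAle u hu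
          have e4 := hRBle v hv
          gcongr <;> positivity
      _ = K * |u - v| := by rw [hK_def]; ring
  have hfmemIci : ∀ t : ℝ, a ≤ t → S1.Mem (f t) := fun t ht => hfmem t (ha0.trans_le ht)
  -- continuity of f on Ici a
  have hfcont : ContinuousOn f (Ici a) := by
    have : LipschitzOnWith (Real.toNNReal K) f (Ici a) := by
      apply LipschitzOnWith.of_dist_le_mul
      intro x hx y hy
      rw [Real.coe_toNNReal K hK0, dist_eq_norm, Real.dist_eq]
      exact (S1.opNorm_le_inorm _ (hmem_sub (hfmemIci x hx) (hfmemIci y hy))).trans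
        (hflip x hx y hy)
    exact this.continuousOn
  -- integrability of the dominating function
  have hg0int : IntegrableOn g0 (Ioi a) := by
    have h1 : IntegrableOn (fun t : ℝ => C * t ^ (-2 : ℝ)) (Ioi a) :=
      (integrableOn_Ioi_rpow_of_lt (by norm_num) ha0).const_mul C
    refine h1.congr_fun (fun t ht => ?_) measurableSet_Ioi
    have ht0 : 0 < t := ha0.trans ht
    rw [hg0_def]; beta_reduce; rw [Real.rpow_neg ht0.le, Real.rpow_two]
    ring
  -- integrability of f on Ioi μ
  have hfint : ∀ μ : ℝ, a ≤ μ → IntegrableOn f (Ioi μ) := by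
    intro μ hμ
    have hsub : Ioi μ ⊆ Ici a := fun x hx => hμ.trans hx.le
    refine Integrable.mono' (hg0int.mono_set (Ioi_subset_Ioi hμ))
      ((hfcont.mono hsub).aestronglyMeasurable measurableSet_Ioi) ?_
    filter_upwards [ae_restrict_mem measurableSet_Ioi] with t ht
    exact (S1.opNorm_le_inorm _ (hfmemIci t (hsub ht))).trans (hfnorm t (hsub ht))
  have hmemIoi : ∀ μ : ℝ, a ≤ μ → S1.Mem (∫ t in Ioi μ, f t) := by
    intro μ hμ
    exact (S1.setIntegral_mem measurableSet_Ioi (hg0int.mono_set (Ioi_subset_Ioi hμ))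
      (fun t ht => ⟨hfmemIci t (hμ.trans ht.le), hfnorm t (hμ.trans ht.le)⟩)
      (hfint μ hμ)).1
  -- interval integrability
  have hII : ∀ c d : ℝ, a ≤ c → a ≤ d → IntervalIntegrable f volume c d := by
    intro c d hc hd
    apply ContinuousOn.intervalIntegrable
    exact hfcont.mono (fun x hx => le_trans (le_min hc hd) hx.1)
  have hmemII : ∀ c d : ℝ, a ≤ c → a ≤ d → S1.Mem (∫ u in c..d, f u) := by
    intro c d hc hd
    rcases le_total c d with h | h
    · rw [intervalIntegral.integral_of_le h]
      exact (S1.setIntegral_mem measurableSet_Ioc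
        (hg0int.mono_set (fun x hx => lt_of_le_of_lt hc hx.1))
        (fun t ht => ⟨hfmemIci t (hc.trans ht.1.le), hfnorm t (hc.trans ht.1.le)⟩)
        ((hfint c hc).mono_set Ioc_subset_Ioi_self)).1
    · rw [intervalIntegral.integral_of_ge h]
      have hm : S1.Mem (∫ t in Ioc d c, f t) := (S1.setIntegral_mem measurableSet_Ioc
        (hg0int.mono_set (fun x hx => lt_of_le_of_lt hd hx.1))
        (fun t ht => ⟨hfmemIci t (hd.trans ht.1.le), hfnorm t (hd.trans ht.1.le)⟩)
        ((hfint d hd).mono_set Ioc_subset_Ioi_self)).1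
      have := S1.smul_mem (-1) hm
      simpa [neg_smul, one_smul] using this
  have hflam_mem : S1.Mem (f lam) := hfmem lam hlam0
  -- key quadratic bound
  have hEbound : ∀ l : ℝ, a ≤ l → S1.Mem (∫ u in lam..l, (f u - f lam)) ∧
      S1.inorm (∫ u in lam..l, (f u - f lam)) ≤ K * (l - lam) ^ 2 := by
    intro l hl
    have halam' : a ≤ lam := halam.le
    have hnegnorm : ∀ S : X →L[ℂ] X, S1.inorm (-S) = S1.inorm S := by
      intro S
      have := S1.inorm_smul (-1) S
      simpa [neg_smul, one_smul] using this
    rcases le_total lam l with h | h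
    · rw [intervalIntegral.integral_of_le h]
      have hb : ∀ t ∈ Ioc lam l, S1.Mem (f t - f lam) ∧
          S1.inorm (f t - f lam) ≤ K * (l - lam) := by
        intro t ht
        refine ⟨hmem_sub (hfmemIci t (halam'.trans ht.1.le)) hflam_mem,
          (hflip t (halam'.trans ht.1.le) lam halam').trans ?_⟩
        have habs : |t - lam| ≤ l - lam := by
          rw [abs_of_nonneg (by linarith [ht.1])]; linarith [ht.2]
        exact mul_le_mul_of_nonneg_left habs hK0
      have hint : IntegrableOn (fun u => f u - f lam) (Ioc lam l) :=
        ((hfint lam halam').mono_set Ioc_subset_Ioi_self).sub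
          (integrableOn_const measure_Ioc_lt_top.ne)
      obtain ⟨hm, hb'⟩ := S1.setIntegral_mem measurableSet_Ioc
        (integrableOn_const measure_Ioc_lt_top.ne) hb hint
      refine ⟨hm, hb'.trans ?_⟩
      rw [setIntegral_const, Real.volume_real_Ioc_of_le h,
        smul_eq_mul]
      apply le_of_eq; ring
    · rw [intervalIntegral.integral_of_ge h]
      have hb : ∀ t ∈ Ioc l lam, S1.Mem (f t - f lam) ∧
          S1.inorm (f t - f lam) ≤ K * (lam - l) := by
        intro t ht
        refine ⟨hmem_sub (hfmemIci t (hl.trans ht.1.le)) hflam_mem,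
          (hflip t (hl.trans ht.1.le) lam halam').trans ?_⟩
        have habs : |t - lam| ≤ lam - l := by
          rw [abs_of_nonpos (by linarith [ht.2])]; linarith [ht.1]
        exact mul_le_mul_of_nonneg_left habs hK0
      have hint : IntegrableOn (fun u => f u - f lam) (Ioc l lam) :=
        ((hfint l hl).mono_set Ioc_subset_Ioi_self).sub
          (integrableOn_const measure_Ioc_lt_top.ne)
      obtain ⟨hm, hb'⟩ := S1.setIntegral_mem measurableSet_Ioc
        (integrableOn_const measure_Ioc_lt_top.ne) hb hint
      constructor
      · have := S1.smul_mem (-1) hm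
        simpa [neg_smul, one_smul] using this
      · rw [hnegnorm]
        refine hb'.trans ?_
        rw [setIntegral_const, Real.volume_real_Ioc_of_le h,
          smul_eq_mul]
        apply le_of_eq; ring
  -- real smul is complex smul
  have hsmulC : ∀ (r : ℝ) (S : X →L[ℂ] X), r • S = ((r : ℂ)) • S := by
    intro r S
    rw [show ((r : ℂ)) = r • (1 : ℂ) by simp [Complex.real_smul], smul_one_smul]
  -- the splitting identity
  have hkey : ∀ l : ℝ, a < l →
      tr (∫ t in Ioi l, f t) = tr (∫ t in Ioi a, f t) - tr (∫ u in a..l, f u) := by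
    intro l hl
    have hsplit : ∫ t in Ioi a, f t = (∫ t in Ioc a l, f t) + ∫ t in Ioi l, f t := by
      have := setIntegral_union (Ioc_disjoint_Ioi le_rfl) measurableSet_Ioi
        ((hfint a le_rfl).mono_set Ioc_subset_Ioi_self) (hfint l hl.le) (f := f) (μ := volume)
      rwa [Ioc_union_Ioi_eq_Ioi hl.le] at this
    have hm1 : S1.Mem (∫ t in Ioc a l, f t) := by
      have := hmemII a l le_rfl hl.le
      rwa [intervalIntegral.integral_of_le hl.le] at this
    have h2 : tr (∫ t in Ioi a, f t) = tr (∫ t in Ioc a l, f t) + tr (∫ t in Ioi l, f t) := by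
      rw [hsplit]; exact htr_add _ _ hm1 (hmemIoi l hl.le)
    rw [intervalIntegral.integral_of_le hl.le, h2]; ring
  -- derivative of the primitive
  have hDF : HasDerivAt (fun l => tr (∫ u in a..l, f u)) (tr (f lam)) lam := by
    rw [hasDerivAt_iff_isLittleO]
    have h2o : (fun l : ℝ => (l - lam) ^ 2) =o[nhds lam] (fun l : ℝ => l - lam) := by
      have h1 : (fun l : ℝ => l - lam) =o[nhds lam] (fun _ : ℝ => (1 : ℝ)) := by
        rw [Asymptotics.isLittleO_one_iff]
        exact (continuous_id.sub continuous_const).tendsto' lam 0 (by simp)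
      have := h1.mul_isBigO (Asymptotics.isBigO_refl (fun l : ℝ => l - lam) (nhds lam))
      simpa [pow_two] using this
    refine Asymptotics.IsBigO.trans_isLittleO ?_ h2o
    rw [Asymptotics.isBigO_iff]
    refine ⟨K, ?_⟩
    filter_upwards [Ioi_mem_nhds halam] with l hl
    have hEq : tr (∫ u in a..l, f u) - tr (∫ u in a..lam, f u) - (l - lam) • tr (f lam) =
        tr (∫ u in lam..l, (f u - f lam)) := by
      have h1 : (∫ u in a..l, f u) = (∫ u in a..lam, f u) + ∫ u in lam..l, f u :=
        (intervalIntegral.integral_add_adjacent_intervals (hII a lam le_rfl halam.le)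
          (hII lam l halam.le hl.le)).symm
      have h2 : (∫ u in lam..l, f u) =
          (∫ u in lam..l, (f u - f lam)) + ((l - lam : ℝ) : ℂ) • f lam := by
        rw [intervalIntegral.integral_sub (hII lam l halam.le hl.le) intervalIntegrable_const,
          intervalIntegral.integral_const, hsmulC]
        abel
      have hmE := (hEbound l hl.le).1
      have hm2 : S1.Mem (((l - lam : ℝ) : ℂ) • f lam) := S1.smul_mem _ hflam_mem
      rw [h1, htr_add _ _ (hmemII a lam le_rfl halam.le)
        (by rw [h2]; exact S1.add_mem hmE hm2)]
      rw [h2, htr_add _ _ hmE hm2, htr_smul _ _ hflam_mem]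
      rw [show (l - lam) • tr (f lam) = ((l - lam : ℝ) : ℂ) * tr (f lam) from
        Complex.real_smul]
      ring
    rw [hEq]
    have hE := (hEbound l hl.le).2
    calc ‖tr (∫ u in lam..l, (f u - f lam))‖
        ≤ S1.inorm (∫ u in lam..l, (f u - f lam)) := htr_bound _ (hEbound l hl.le).1
      _ ≤ K * (l - lam) ^ 2 := hE
      _ = K * ‖(l - lam) ^ 2‖ := by rw [Real.norm_eq_abs, abs_of_nonneg (sq_nonneg _)]
  -- eventual form of pdet
  have hEv : (fun l => pdet tr RA RB l) =ᶠ[nhds lam]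
      (fun l => Complex.exp (tr (∫ t in Ioi a, f t) - tr (∫ u in a..l, f u))) := by
    filter_upwards [Ioi_mem_nhds halam] with l hl
    show Complex.exp (tr (∫ t in Ioi l, (RB t - RA t))) = _
    rw [← hf_def, hkey l hl]
  -- assemble
  have hDexp : HasDerivAt
      (fun l => Complex.exp (tr (∫ t in Ioi a, f t) - tr (∫ u in a..l, f u)))
      (Complex.exp (tr (∫ t in Ioi a, f t) - tr (∫ u in a..lam, f u)) * (-(tr (f lam)))) lam :=
    (hDF.const_sub _).cexp
  have hfinal := hDexp.congr_of_eventuallyEq hEv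
  have hval : Complex.exp (tr (∫ t in Ioi a, f t) - tr (∫ u in a..lam, f u)) * (-(tr (f lam)))
      = pdet tr RA RB lam * tr (RA lam - RB lam) := by
    have hpd : pdet tr RA RB lam =
        Complex.exp (tr (∫ t in Ioi a, f t) - tr (∫ u in a..lam, f u)) := by
      show Complex.exp (tr (∫ t in Ioi lam, (RB t - RA t))) = _
      rw [← hf_def, hkey lam halam]
    have htrneg : tr (RA lam - RB lam) = -(tr (f lam)) := by
      have h1 : RA lam - RB lam = (-1 : ℂ) • (f lam) := by
        rw [hf_def]; simp [neg_smul, one_smul, neg_sub]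
      rw [h1, htr_smul _ _ hflam_mem]; ring
    rw [hpd, htrneg]
  rw [← hval]
  exact hfinal
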